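/- Let p and q be probability mass functions on the same countable alphabet A, and suppose c = ∑_{a∈A} p(a)·q(a) < 1. Define ρ(a) = p(a)·(1−q(a))/(1−c) and ν(a) = q(a)·(1−p(a))/(1−c). Then ρ and ν are probability mass functions on A, and the total variation distance factorizes as ‖p,q‖ = (1−c)·‖ρ,ν‖. -/

import Mathlib

/-- Total variation distance between two pmfs: `1 - ∑ min`. -/
noncomputable def tv {A : Type*} (p q : A → ℝ) : ℝ := 1 - ∑' a, min (p a) (q a)

/-- one step of the factorization of total variation distance. -/
theorem stmt0 {A : Type*} [Countable A] (p q : A → ℝ)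
    (hp0 : ∀ a, 0 ≤ p a) (hp1 : HasSum p 1)
    (hq0 : ∀ a, 0 ≤ q a) (hq1 : HasSum q 1)
    (c : ℝ) (hc : c = ∑' a, p a * q a) (hc1 : c < 1)
    (ρ ν : A → ℝ)
    (hρ : ∀ a, ρ a = p a * (1 - q a) / (1 - c))
    (hν : ∀ a, ν a = q a * (1 - p a) / (1 - c)) :
    (∀ a, 0 ≤ ρ a) ∧ HasSum ρ 1 ∧ (∀ a, 0 ≤ ν a) ∧ HasSum ν 1 ∧
      tv p q = (1 - c) * tv ρ ν := by
  have hd : (0:ℝ) < 1 - c := by linarith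
  have hple : ∀ a, p a ≤ 1 := fun a => le_hasSum hp1 a (fun b _ => hp0 b)
  have hqle : ∀ a, q a ≤ 1 := fun a => le_hasSum hq1 a (fun b _ => hq0 b)
  have hpq_sum : Summable (fun a => p a * q a) :=
    Summable.of_nonneg_of_le (fun a => mul_nonneg (hp0 a) (hq0 a))
      (fun a => by nlinarith [hp0 a, hqle a]) hp1.summable
  have hpqc : HasSum (fun a => p a * q a) c := hc ▸ hpq_sum.hasSum
  have hρ0 : ∀ a, 0 ≤ ρ a := fun a => by
    rw [hρ a]; exact div_nonneg (mul_nonneg (hp0 a) (by linarith [hqle a])) hd.le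
  have hν0 : ∀ a, 0 ≤ ν a := fun a => by
    rw [hν a]; exact div_nonneg (mul_nonneg (hq0 a) (by linarith [hple a])) hd.le
  have hρ1 : HasSum ρ 1 := by
    have h := (hp1.sub hpqc).div_const (1 - c)
    rw [div_self hd.ne'] at h
    have he : ρ = fun a => (p a - p a * q a) / (1 - c) := by
      funext a; rw [hρ a]; ring
    rw [he]; exact h
  have hν1 : HasSum ν 1 := by
    have h := (hq1.sub (by simpa [mul_comm] using hpqc : HasSum (fun a => q a * p a) c)).div_const (1 - c)
    rw [div_self hd.ne'] at h
    have he : ν = fun a => (q a - q a * p a) / (1 - c) := by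
      funext a; rw [hν a]; ring
    rw [he]; exact h
  have hmin_sum : Summable (fun a => min (p a) (q a)) :=
    Summable.of_nonneg_of_le (fun a => le_min (hp0 a) (hq0 a))
      (fun a => min_le_left _ _) hp1.summable
  set M := ∑' a, min (p a) (q a) with hM
  have hminM : HasSum (fun a => min (p a) (q a)) M := hmin_sum.hasSum
  have key : ∀ a, min (ρ a) (ν a) = (min (p a) (q a) - p a * q a) / (1 - c) := by
    intro a; rw [hρ a, hν a]
    rcases le_total (p a) (q a) with h | h
    · rw [min_eq_left ((div_le_div_iff_of_pos_right hd).mpr (by nlinarith)), min_eq_left h]; ring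
    · rw [min_eq_right ((div_le_div_iff_of_pos_right hd).mpr (by nlinarith)), min_eq_right h]; ring
  have hρν : HasSum (fun a => min (ρ a) (ν a)) ((M - c) / (1 - c)) := by
    have h := (hminM.sub hpqc).div_const (1 - c)
    have he : (fun a => (min (p a) (q a) - p a * q a) / (1 - c)) = fun a => min (ρ a) (ν a) :=
      funext fun a => (key a).symm
    rw [he] at h; exact h
  refine ⟨hρ0, hρ1, hν0, hν1, ?_⟩
  unfold tv
  rw [hρν.tsum_eq, ← hM]
  field_simp
  ring
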